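/- Let Φ ∈ S₂(E, E_*). There is an isometry V from the two-variable de Branges–Rovnyak space H_Φ into the scattering subspace K_Φ such that for each f ∈ H_Φ, Vf = (f, g) for some g ∈ L²⊖H²(E), and the adjoint V* satisfies V*(f, g) = f for every (f, g) ∈ K_Φ. On the dense set D_{Φ*}² H²(E_*), V is given by V(D_{Φ*}² h) = P_Φ(h, Φ*h). -/

import Mathlib

/- STATEMENT 10: Let Φ ∈ S₂(E,E_*).  There is an isometry V : H_Φ → K_Φ such that for each
f ∈ H_Φ, Vf = (f, g) for some g ∈ L²⊖H²(E), with V*(f,g) = f for every (f,g) ∈ K_Φ; on the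
dense subset D_{Φ*}²H²(E_*) of H_Φ, V is given by V(D_{Φ*}² h) = P_Φ(h, Φ*h).

H²(E_*) is the abstract Hilbert space `H2`, isometrically embedded into L²(E_*) by `j`
with range H² = range P₊; D = D_{Φ*} with D² = I − ΦP₊Φ* transported through j
(hypothesis `hDj`); H_Φ is the operator range of D, with inner product `ipH`;
ℋ = range S with inner product `ipW`, and K_Φ, P_Φ as usual.  Writing
V h := P_Φ(j h, Φ* j h), the conclusions state:
(1) V(D²h) depends isometrically on D²h (hence extends to an isometry of H_Φ into K_Φ);
(2) V(D²h) has first component j(D²h) (i.e. Vf = (f,g)) and second component in L²⊖H²(E);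
(3) for every (f,g) ∈ K_Φ, V*(f,g) = f: f is (the boundary function of) an element of
    H_Φ and ⟨(f,g), V x⟩_ℋ = ⟨f, x⟩_{H_Φ} for all x in the dense subset D²H² of H_Φ. -/

open scoped ComplexInnerProductSpace

noncomputable def c1 {A B : Type*} [NormedAddCommGroup A] [NormedAddCommGroup B]
    (x : WithLp 2 (A × B)) : A := (WithLp.equiv 2 (A × B) x).1

noncomputable def c2 {A B : Type*} [NormedAddCommGroup A] [NormedAddCommGroup B]
    (x : WithLp 2 (A × B)) : B := (WithLp.equiv 2 (A × B) x).2

noncomputable def pr {A B : Type*} [NormedAddCommGroup A] [NormedAddCommGroup B]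
    (f : A) (g : B) : WithLp 2 (A × B) := (WithLp.equiv 2 (A × B)).symm (f, g)

lemma c1_pr {A B : Type*} [NormedAddCommGroup A] [NormedAddCommGroup B] (f : A) (g : B) :
    c1 (pr f g) = f := rfl

lemma c2_pr {A B : Type*} [NormedAddCommGroup A] [NormedAddCommGroup B] (f : A) (g : B) :
    c2 (pr f g) = g := rfl

lemma pr_congr {A B : Type*} [NormedAddCommGroup A] [NormedAddCommGroup B]
    {a a' : A} {b b' : B} (h1 : a = a') (h2 : b = b') : pr a b = pr a' b' := by rw [h1, h2]

lemma inner_split {A B : Type*} [NormedAddCommGroup A] [InnerProductSpace ℂ A]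
    [NormedAddCommGroup B] [InnerProductSpace ℂ B] (x y : WithLp 2 (A × B)) :
    (⟪x, y⟫ : ℂ) = ⟪c1 x, c1 y⟫ + ⟪c2 x, c2 y⟫ := rfl

/-- A Douglas-type lemma: if `|⟪y, h⟫| ≤ C‖D h‖` for all `h` and `D` is self-adjoint,
then `y` is in the range of `D`. -/
lemma douglas_aux {H : Type*} [NormedAddCommGroup H] [InnerProductSpace ℂ H] [CompleteSpace H]
    (D : H →L[ℂ] H) (hD : IsSelfAdjoint D) (y : H) (C : ℝ)
    (hb : ∀ h : H, ‖(⟪y, h⟫ : ℂ)‖ ≤ C * ‖D h‖) : ∃ x, D x = y := by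
  classical
  set Dl : H →ₗ[ℂ] H := (D : H →ₗ[ℂ] H) with hDl
  set L : H →ₗ[ℂ] ℂ := (innerSL ℂ y : H →L[ℂ] ℂ).toLinearMap with hLdef
  have hLapp : ∀ h : H, L h = ⟪y, h⟫ := fun h => rfl
  have hker : LinearMap.ker Dl ≤ LinearMap.ker L := by
    intro h hh
    have h0 : D h = 0 := hh
    have hb' := hb h
    rw [h0, norm_zero, mul_zero] at hb'
    have : ‖(⟪y, h⟫ : ℂ)‖ = 0 := le_antisymm hb' (norm_nonneg _)
    simpa [LinearMap.mem_ker, hLapp] using this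
  set φ0 : LinearMap.range Dl →ₗ[ℂ] ℂ :=
    (Submodule.liftQ (LinearMap.ker Dl) L hker).comp
      (Dl.quotKerEquivRange.symm : LinearMap.range Dl →ₗ[ℂ] H ⧸ LinearMap.ker Dl) with hφ0def
  have hφ0 : ∀ (h : H) (hm : Dl h ∈ LinearMap.range Dl), φ0 ⟨Dl h, hm⟩ = ⟪y, h⟫ := by
    intro h hm
    simp only [hφ0def, LinearMap.coe_comp, Function.comp_apply, LinearEquiv.coe_coe,
      LinearMap.quotKerEquivRange_symm_apply_image]
    exact Submodule.liftQ_apply _ L h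
  have hφ0b : ∀ r : LinearMap.range Dl, ‖φ0 r‖ ≤ C * ‖(r : H)‖ := by
    rintro ⟨r, h, rfl⟩
    exact (congrArg norm (hφ0 h (LinearMap.mem_range_self _ h))).trans_le (hb h)
  set φ : LinearMap.range Dl →L[ℂ] ℂ := φ0.mkContinuous C hφ0b with hφdef
  obtain ⟨g, hg, -⟩ := exists_extension_norm_eq (LinearMap.range Dl) φ
  set w := (InnerProductSpace.toDual ℂ H).symm g with hw
  refine ⟨w, ?_⟩
  apply ext_inner_right ℂ
  intro v
  have h1 : (⟪D w, v⟫ : ℂ) = ⟪w, D v⟫ := by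
    conv_lhs => rw [← hD.adjoint_eq]
    exact ContinuousLinearMap.adjoint_inner_left D v w
  have h2 : (⟪w, D v⟫ : ℂ) = g (D v) := InnerProductSpace.toDual_symm_apply
  have hm : Dl v ∈ LinearMap.range Dl := LinearMap.mem_range_self _ v
  have h3 : g (D v) = φ ⟨Dl v, hm⟩ := hg ⟨Dl v, hm⟩
  have h4 : φ ⟨Dl v, hm⟩ = ⟪y, v⟫ := hφ0 v hm
  rw [h1, h2, h3, h4]

lemma range_subset_ker_orth {H : Type*} [NormedAddCommGroup H] [InnerProductSpace ℂ H]
    [CompleteSpace H] (S : H →L[ℂ] H) (hS : IsSelfAdjoint S) (u : H) :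
    S u ∈ (LinearMap.ker (S : H →ₗ[ℂ] H))ᗮ := by
  rw [Submodule.mem_orthogonal]
  intro z hz
  have hz0 : S z = 0 := hz
  have : (⟪z, S u⟫ : ℂ) = ⟪S z, u⟫ := by
    conv_rhs => rw [← hS.adjoint_eq]
    exact (ContinuousLinearMap.adjoint_inner_left S u z).symm
  rw [this, hz0, inner_zero_left]

set_option maxHeartbeats 1000000 in
set_option synthInstance.maxHeartbeats 500000 in
theorem stmt_10 {L2E L2Es H2 : Type*}
    [NormedAddCommGroup L2E] [InnerProductSpace ℂ L2E] [CompleteSpace L2E]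
    [NormedAddCommGroup L2Es] [InnerProductSpace ℂ L2Es] [CompleteSpace L2Es]
    [NormedAddCommGroup H2] [InnerProductSpace ℂ H2] [CompleteSpace H2]
    (MΦ : L2E →L[ℂ] L2Es) (hMΦ : ‖MΦ‖ ≤ 1)
    (S : WithLp 2 (L2Es × L2E) →L[ℂ] WithLp 2 (L2Es × L2E))
    (hS : IsSelfAdjoint S) (hSpos : ∀ x, 0 ≤ (⟪S x, x⟫).re)
    (hS2 : ∀ (f : L2Es) (g : L2E),
      S (S (pr f g)) = pr (f + MΦ g) (ContinuousLinearMap.adjoint MΦ f + g))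
    (PpE : L2E →L[ℂ] L2E) (hPpE : IsSelfAdjoint PpE) (hPpE2 : PpE ∘L PpE = PpE)
    (PpEs : L2Es →L[ℂ] L2Es) (hPpEs : IsSelfAdjoint PpEs) (hPpEs2 : PpEs ∘L PpEs = PpEs)
    (hMΦH2 : ∀ h : L2E, PpEs (MΦ (PpE h)) = MΦ (PpE h))
    -- j : H²(E_*) → L²(E_*), isometric with range H²(E_*):
    (j : H2 →L[ℂ] L2Es)
    (hj : ∀ x y : H2, ⟪j x, j y⟫ = ⟪x, y⟫)
    (hjrange : Set.range j = Set.range PpEs)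
    -- D = D_{Φ*} = (I − ΦP_{H²(E)}Φ*)^{1/2} on H²(E_*):
    (D : H2 →L[ℂ] H2) (hD : IsSelfAdjoint D) (hDpos : ∀ x, 0 ≤ (⟪D x, x⟫).re)
    (hDj : ∀ h : H2, j (D (D h)) =
      j h - PpEs (MΦ (PpE (ContinuousLinearMap.adjoint MΦ (j h)))))
    -- P_Φ, the orthogonal projection onto K_Φ:
    (PΦ : WithLp 2 (L2Es × L2E) →L[ℂ] WithLp 2 (L2Es × L2E))
    (hPΦ : ∀ (f : L2Es) (g : L2E),
      PΦ (pr f g) = pr (PpEs f - MΦ (PpE g))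
        ((g - PpE g) - ContinuousLinearMap.adjoint MΦ (f - PpEs f)))
    -- the operator-range inner products of ℋ and of H_Φ:
    (ipW : WithLp 2 (L2Es × L2E) → WithLp 2 (L2Es × L2E) → ℂ)
    (hipW : ∀ x y, x ∈ (LinearMap.ker (S : WithLp 2 (L2Es × L2E) →ₗ[ℂ] WithLp 2 (L2Es × L2E)))ᗮ → ipW (S x) (S y) = ⟪x, y⟫)
    (ipH : H2 → H2 → ℂ)
    (hipH : ∀ x y : H2, x ∈ (LinearMap.ker (D : H2 →ₗ[ℂ] H2))ᗮ → ipH (D x) (D y) = ⟪x, y⟫) :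
    -- (1) V(D²h) = P_Φ(h, Φ*h) is isometric from H_Φ to K_Φ:
    (∀ h h' : H2,
        ipW (PΦ (pr (j h) (ContinuousLinearMap.adjoint MΦ (j h))))
            (PΦ (pr (j h') (ContinuousLinearMap.adjoint MΦ (j h')))) =
          ipH (D (D h)) (D (D h'))) ∧
      -- (2) Vf has the form (f, g) with g ∈ L²⊖H²(E), and Vf ∈ K_Φ ⊆ ℋ:
      (∀ h : H2,
        c1 (PΦ (pr (j h) (ContinuousLinearMap.adjoint MΦ (j h)))) = j (D (D h)) ∧
        PpE (c2 (PΦ (pr (j h) (ContinuousLinearMap.adjoint MΦ (j h))))) = 0 ∧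
        PΦ (pr (j h) (ContinuousLinearMap.adjoint MΦ (j h))) ∈ Set.range S) ∧
      -- (3) V*(f, g) = f for every (f, g) ∈ K_Φ:
      ∀ p ∈ Set.range S, PpEs (c1 p) = c1 p → PpE (c2 p) = 0 →
        ∃ x : H2, j (D x) = c1 p ∧
          ∀ h : H2,
            ipW p (PΦ (pr (j h) (ContinuousLinearMap.adjoint MΦ (j h)))) =
              ipH (D x) (D (D h)) := by
  classical
  have hSadj := hS.adjoint_eq
  have hDadj := hD.adjoint_eq
  have hPpEad := hPpE.adjoint_eq
  have hPpE2' : ∀ xx : L2E, PpE (PpE xx) = PpE xx :=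
    fun xx => ContinuousLinearMap.ext_iff.mp hPpE2 xx
  have hPpEs2' : ∀ xx : L2Es, PpEs (PpEs xx) = PpEs xx :=
    fun xx => ContinuousLinearMap.ext_iff.mp hPpEs2 xx
  have hPpEsj : ∀ h : H2, PpEs (j h) = j h := by
    intro h
    obtain ⟨z, hz⟩ : j h ∈ Set.range PpEs := by rw [← hjrange]; exact Set.mem_range_self h
    rw [← hz, hPpEs2']
  set A := ContinuousLinearMap.adjoint MΦ with hA
  -- V(D²h) = S(S(u h)) where u h := (j h, −P₊ Φ* j h)
  have hVu : ∀ h : H2, PΦ (pr (j h) (A (j h))) =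
      S (S (pr (j h) (-(PpE (A (j h)))))) := by
    intro h
    rw [hPΦ, hS2, hPpEsj h]
    refine pr_congr ?_ ?_
    · rw [map_neg, sub_eq_add_neg]
    · rw [sub_self, map_zero, sub_zero, sub_eq_add_neg]
  have hc1V : ∀ h : H2, c1 (PΦ (pr (j h) (A (j h)))) = j (D (D h)) := by
    intro h
    rw [hPΦ, hPpEsj h, c1_pr, hDj h, hMΦH2]
  have hc2V : ∀ h : H2, PpE (c2 (PΦ (pr (j h) (A (j h))))) = 0 := by
    intro h
    rw [hPΦ, hPpEsj h, c2_pr, sub_self, map_zero, sub_zero, map_sub, hPpE2', sub_self]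
  -- inner-product moving lemmas
  have hS1 : ∀ a b : WithLp 2 (L2Es × L2E), (⟪S a, b⟫ : ℂ) = ⟪a, S b⟫ := by
    intro a b
    conv_lhs => rw [← hSadj]
    exact ContinuousLinearMap.adjoint_inner_left S b a
  have hD1 : ∀ a b : H2, (⟪D a, b⟫ : ℂ) = ⟪a, D b⟫ := by
    intro a b
    conv_lhs => rw [← hDadj]
    exact ContinuousLinearMap.adjoint_inner_left D b a
  -- orthogonality to P₊-killed vectors
  have horthL : ∀ wE z : L2E, PpE z = 0 → (⟪-(PpE wE), z⟫ : ℂ) = 0 := by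
    intro wE z hz0
    rw [inner_neg_left, ← hPpEad, ContinuousLinearMap.adjoint_inner_left, hz0,
      inner_zero_right, neg_zero]
  have horthR : ∀ wE z : L2E, PpE wE = 0 → (⟪wE, -(PpE z)⟫ : ℂ) = 0 := by
    intro wE z hw0
    rw [inner_neg_right, ← hPpEad, ContinuousLinearMap.adjoint_inner_right, hw0,
      inner_zero_left, neg_zero]
  -- the key inner-product computation
  have part1inner : ∀ h h' : H2,
      (⟪pr (j h) (-(PpE (A (j h)))), PΦ (pr (j h') (A (j h')))⟫ : ℂ) = ⟪h, D (D h')⟫ := by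
    intro h h'
    rw [inner_split, c1_pr, c2_pr, hc1V h', hj, horthL _ _ (hc2V h'), add_zero]
  have hSmem : ∀ x, S x ∈ (LinearMap.ker (S : WithLp 2 (L2Es × L2E) →ₗ[ℂ] WithLp 2 (L2Es × L2E)))ᗮ := range_subset_ker_orth S hS
  have hDmem : ∀ x, D x ∈ (LinearMap.ker (D : H2 →ₗ[ℂ] H2))ᗮ := range_subset_ker_orth D hD
  refine ⟨?_, ?_, ?_⟩
  · -- (1)
    intro h h'
    rw [hVu h, hVu h', hipW _ _ (hSmem _), hS1, ← hVu h', part1inner h h',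
      hipH (D h) (D h') (hDmem h), hD1 h (D h')]
  · -- (2)
    intro h
    exact ⟨hc1V h, hc2V h, ⟨S (pr (j h) (-(PpE (A (j h))))), (hVu h).symm⟩⟩
  · -- (3)
    rintro p ⟨q₀, rfl⟩ hp1 hp2
    haveI : Submodule.HasOrthogonalProjection (LinearMap.ker (S : WithLp 2 (L2Es × L2E) →ₗ[ℂ] WithLp 2 (L2Es × L2E))) :=
      Submodule.HasOrthogonalProjection.ofCompleteSpace _
    haveI : Submodule.HasOrthogonalProjection (LinearMap.ker (S : WithLp 2 (L2Es × L2E) →ₗ[ℂ] WithLp 2 (L2Es × L2E)))ᗮ := inferInstance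
    haveI : Submodule.HasOrthogonalProjection (LinearMap.ker (D : H2 →ₗ[ℂ] H2)) :=
      Submodule.HasOrthogonalProjection.ofCompleteSpace _
    haveI : Submodule.HasOrthogonalProjection (LinearMap.ker (D : H2 →ₗ[ℂ] H2))ᗮ := inferInstance
    set q : WithLp 2 (L2Es × L2E) :=
      (Submodule.orthogonalProjectionOnto (LinearMap.ker (S : WithLp 2 (L2Es × L2E) →ₗ[ℂ] WithLp 2 (L2Es × L2E)))ᗮ q₀ : WithLp 2 (L2Es × L2E)) with hq
    have hqmem : q ∈ (LinearMap.ker (S : WithLp 2 (L2Es × L2E) →ₗ[ℂ] WithLp 2 (L2Es × L2E)))ᗮ := by rw [hq]; exact SetLike.coe_mem _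
    have hSq : S q = S q₀ := by
      have hdec := Submodule.starProjection_add_starProjection_orthogonal
        (K := (LinearMap.ker (S : WithLp 2 (L2Es × L2E) →ₗ[ℂ] WithLp 2 (L2Es × L2E)))) q₀
      rw [Submodule.starProjection_apply, Submodule.starProjection_apply] at hdec
      have hk : S ((Submodule.orthogonalProjectionOnto (LinearMap.ker (S : WithLp 2 (L2Es × L2E) →ₗ[ℂ] WithLp 2 (L2Es × L2E))) q₀ : WithLp 2 (L2Es × L2E))) = 0 :=
        LinearMap.mem_ker.mp (SetLike.coe_mem _)
      conv_rhs => rw [← hdec]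
      rw [map_add, hk, zero_add]
    obtain ⟨yy, hyy⟩ : ∃ yy : H2, j yy = c1 (S q₀) := by
      have hmem : c1 (S q₀) ∈ Set.range PpEs := ⟨c1 (S q₀), hp1⟩
      rw [← hjrange] at hmem
      exact hmem
    have hinner : ∀ h : H2,
        (⟪yy, h⟫ : ℂ) = ⟪q, S (pr (j h) (-(PpE (A (j h)))))⟫ := by
      intro h
      calc (⟪yy, h⟫ : ℂ) = ⟪j yy, j h⟫ := (hj yy h).symm
        _ = ⟪c1 (S q₀), j h⟫ + ⟪c2 (S q₀), -(PpE (A (j h)))⟫ := by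
            rw [hyy, horthR _ _ hp2, add_zero]
        _ = ⟪S q₀, pr (j h) (-(PpE (A (j h))))⟫ := by
            rw [inner_split (S q₀) (pr (j h) (-(PpE (A (j h))))), c1_pr, c2_pr]
        _ = ⟪S q, pr (j h) (-(PpE (A (j h))))⟫ := by rw [hSq]
        _ = ⟪q, S (pr (j h) (-(PpE (A (j h)))))⟫ := hS1 q _
    have hnorm : ∀ h : H2, ‖S (pr (j h) (-(PpE (A (j h)))))‖ = ‖D h‖ := by
      intro h
      have hiseq : (⟪S (pr (j h) (-(PpE (A (j h))))), S (pr (j h) (-(PpE (A (j h)))))⟫ : ℂ)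
          = ⟪D h, D h⟫ := by
        rw [hS1, ← hVu h, part1inner h h, ← hD1 h (D h)]
      rw [norm_eq_sqrt_re_inner (𝕜 := ℂ), norm_eq_sqrt_re_inner (𝕜 := ℂ) (D h), hiseq]
    have hb : ∀ h : H2, ‖(⟪yy, h⟫ : ℂ)‖ ≤ ‖q‖ * ‖D h‖ := by
      intro h
      rw [hinner h]
      calc ‖(⟪q, S (pr (j h) (-(PpE (A (j h)))))⟫ : ℂ)‖
          ≤ ‖q‖ * ‖S (pr (j h) (-(PpE (A (j h)))))‖ := norm_inner_le_norm _ _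
        _ = ‖q‖ * ‖D h‖ := by rw [hnorm h]
    obtain ⟨x₀, hx₀⟩ := douglas_aux D hD yy ‖q‖ hb
    set x : H2 := (Submodule.orthogonalProjectionOnto (LinearMap.ker (D : H2 →ₗ[ℂ] H2))ᗮ x₀ : H2) with hx
    have hxmem : x ∈ (LinearMap.ker (D : H2 →ₗ[ℂ] H2))ᗮ := by rw [hx]; exact SetLike.coe_mem _
    have hDx : D x = yy := by
      have hdec := Submodule.starProjection_add_starProjection_orthogonal
        (K := (LinearMap.ker (D : H2 →ₗ[ℂ] H2))) x₀
      rw [Submodule.starProjection_apply, Submodule.starProjection_apply] at hdec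
      have hk : D ((Submodule.orthogonalProjectionOnto (LinearMap.ker (D : H2 →ₗ[ℂ] H2)) x₀ : H2)) = 0 :=
        LinearMap.mem_ker.mp (SetLike.coe_mem _)
      rw [← hx₀]
      conv_rhs => rw [← hdec]
      rw [map_add, hk, zero_add]
    refine ⟨x, by rw [hDx, hyy], ?_⟩
    intro h
    rw [hVu h, ← hSq, hipW q _ hqmem, ← hinner h,
      hipH x (D h) hxmem, ← hD1 x h, hDx]
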